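/- arXiv:1403.2545 — 2 statements merged into one kernel-verified Lean document; each statement's English description precedes it below -/
import Mathlib

section
/- (Theorem 3: conditional equivalence group for m = 1.) Let n ∈ ℝ with n ≠ 0, ε = ±1, e ∈ {1, -1}, let δ₁, δ₂, δ₃ be real constants with δ₁ ≠ 0, δ₃ > 0, let I ⊆ ℝ be an open interval, let T : ℝ → ℝ be smooth with T'(t) ≠ 0 on I, and let f : ℝ → ℝ be nonvanishing on I. Suppose u : ℝ → ℝ → ℝ is smooth, positive on I × ℝ, and satisfies ∂_t u + ε ∂_x u + f(t) ∂_x^3(u^n) = 0 on I × ℝ, and suppose v : ℝ → ℝ → ℝ is smooth with v(T(t), δ₁(x - εt) + e·ε·T(t) + δ₂) = δ₃·u(t, x) for all t ∈ I, x ∈ ℝ. Then for every t ∈ I and x ∈ ℝ, at the point (T(t), δ₁(x - εt) + e·ε·T(t) + δ₂) one has ∂_τ v + (e·ε) ∂_y v + f̃(τ) ∂_y^3(v^n) = 0, where f̃(T(t)) = δ₁³·δ₃^{1-n}·f(t)/T'(t). -/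
open Real


lemma deriv_comp_affine {g : ℝ → ℝ} (hg : Differentiable ℝ g) (a b x : ℝ) :
    deriv (fun y => g (a * y + b)) x = a * deriv g (a * x + b) := by
  have h1 : HasDerivAt (fun y : ℝ => a * y + b) a x := by
    simpa using ((hasDerivAt_id x).const_mul a).add_const b
  have := ((hg (a * x + b)).hasDerivAt.comp x h1).deriv
  simpa [mul_comm, Function.comp_def] using this

lemma deriv3_comp_affine {g : ℝ → ℝ} (hg : ContDiff ℝ (⊤ : ℕ∞) g) (a b x : ℝ) :
    deriv (deriv (deriv (fun y => g (a * y + b)))) x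
      = a ^ 3 * deriv (deriv (deriv g)) (a * x + b) := by
  have hg1 : ContDiff ℝ (⊤ : ℕ∞) (deriv g) := by simpa using hg.iterate_deriv 1
  have hg2 : ContDiff ℝ (⊤ : ℕ∞) (deriv (deriv g)) := by simpa using hg.iterate_deriv 2
  have htop : ((⊤ : ℕ∞) : WithTop ℕ∞) ≠ 0 := by simp
  have d0 := hg.differentiable htop
  have d1 := hg1.differentiable htop
  have d2 := hg2.differentiable htop
  have haff : ∀ y : ℝ, DifferentiableAt ℝ (fun z : ℝ => a * z + b) y := fun y =>
    (by simpa using ((hasDerivAt_id y).const_mul a).add_const b : HasDerivAt _ a y).differentiableAt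
  have e1 : deriv (fun y => g (a * y + b)) = fun y => a * deriv g (a * y + b) :=
    funext fun y => deriv_comp_affine d0 a b y
  have e2 : deriv (deriv (fun y => g (a * y + b)))
      = fun y => a * (a * deriv (deriv g) (a * y + b)) := by
    rw [e1]; funext y
    have hd : DifferentiableAt ℝ (fun z => deriv g (a * z + b)) y := (d1 _).comp y (haff y)
    rw [deriv_const_mul a hd, deriv_comp_affine d1 a b y]
  rw [e2]
  have hd2 : ∀ y : ℝ, DifferentiableAt ℝ (fun z => deriv (deriv g) (a * z + b)) y :=
    fun y => (d2 _).comp y (haff y)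
  have hdiff : DifferentiableAt ℝ (fun z => a * deriv (deriv g) (a * z + b)) x :=
    (hd2 x).const_mul a
  rw [deriv_const_mul a hdiff, deriv_const_mul a (hd2 x), deriv_comp_affine d2 a b x]; ring

lemma deriv3_const_mul {g : ℝ → ℝ} (hg : ContDiff ℝ (⊤ : ℕ∞) g) (c x : ℝ) :
    deriv (deriv (deriv (fun y => c * g y))) x = c * deriv (deriv (deriv g)) x := by
  have hg1 : ContDiff ℝ (⊤ : ℕ∞) (deriv g) := by simpa using hg.iterate_deriv 1
  have hg2 : ContDiff ℝ (⊤ : ℕ∞) (deriv (deriv g)) := by simpa using hg.iterate_deriv 2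
  have htop : ((⊤ : ℕ∞) : WithTop ℕ∞) ≠ 0 := by simp
  have d0 := hg.differentiable htop
  have d1 := hg1.differentiable htop
  have d2 := hg2.differentiable htop
  have e1 : deriv (fun y => c * g y) = fun y => c * deriv g y :=
    funext fun y => deriv_const_mul c (d0 y)
  have e2 : deriv (deriv (fun y => c * g y)) = fun y => c * deriv (deriv g) y := by
    rw [e1]; exact funext fun y => deriv_const_mul c (d1 y)
  rw [e2, deriv_const_mul c (d2 x)]

lemma curve_deriv {F : ℝ × ℝ → ℝ} (hF : Differentiable ℝ F) {γ1 γ2 : ℝ → ℝ}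
    {t a1 a2 : ℝ} (h1 : HasDerivAt γ1 a1 t) (h2 : HasDerivAt γ2 a2 t) :
    HasDerivAt (fun s => F (γ1 s, γ2 s))
      (a1 * deriv (fun s => F (s, γ2 t)) (γ1 t)
        + a2 * deriv (fun y => F (γ1 t, y)) (γ2 t)) t := by
  set p : ℝ × ℝ := (γ1 t, γ2 t) with hp
  have hFp := (hF p).hasFDerivAt
  have key : HasDerivAt (fun s => F (γ1 s, γ2 s)) (fderiv ℝ F p (a1, a2)) t :=
    hFp.comp_hasDerivAt t (h1.prodMk h2)
  have h10 : deriv (fun s => F (s, γ2 t)) (γ1 t) = fderiv ℝ F p (1, 0) :=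
    (hFp.comp_hasDerivAt (γ1 t) ((hasDerivAt_id (γ1 t)).prodMk (hasDerivAt_const _ _))).deriv
  have h01 : deriv (fun y => F (γ1 t, y)) (γ2 t) = fderiv ℝ F p (0, 1) :=
    (hFp.comp_hasDerivAt (γ2 t) ((hasDerivAt_const _ _).prodMk (hasDerivAt_id (γ2 t)))).deriv
  rw [h10, h01]
  have hsum : (a1, a2) = a1 • ((1 : ℝ), (0 : ℝ)) + a2 • ((0 : ℝ), (1 : ℝ)) := by
    simp [Prod.ext_iff]
  convert key using 1
  rw [hsum, map_add, map_smul, map_smul, smul_eq_mul, smul_eq_mul]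

noncomputable def pdT (u : ℝ → ℝ → ℝ) (t x : ℝ) : ℝ := deriv (fun s => u s x) t
noncomputable def pdX (u : ℝ → ℝ → ℝ) (t x : ℝ) : ℝ := deriv (fun y => u t y) x
noncomputable def pdX3 (u : ℝ → ℝ → ℝ) (t x : ℝ) : ℝ := deriv (deriv (deriv (fun y => u t y))) x

/-- Theorem 3: the conditional equivalence group `G∼_(n,1)` of the subclass
`u_t + ε u_x + f(t)(u^n)_xxx = 0` (the case `m = 1`). -/
theorem conditional_equivalence_group_m_eq_one
    (n : ℝ) (hn : n ≠ 0) (ε e : ℝ) (hε : ε = 1 ∨ ε = -1) (he : e = 1 ∨ e = -1)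
    (δ1 δ2 δ3 : ℝ) (hδ1 : δ1 ≠ 0) (hδ3 : 0 < δ3)
    (I : Set ℝ) (hIopen : IsOpen I) (hIconn : I.OrdConnected)
    (T : ℝ → ℝ) (hT : ContDiff ℝ (⊤ : ℕ∞) T) (hT' : ∀ t ∈ I, deriv T t ≠ 0)
    (f ftil : ℝ → ℝ) (hf : ∀ t ∈ I, f t ≠ 0)
    (u : ℝ → ℝ → ℝ) (hu : ContDiff ℝ (⊤ : ℕ∞) (Function.uncurry u))
    (hupos : ∀ t ∈ I, ∀ x : ℝ, 0 < u t x)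
    (hupde : ∀ t ∈ I, ∀ x : ℝ,
      pdT u t x + ε * pdX u t x + f t * pdX3 (fun t x => u t x ^ n) t x = 0)
    (v : ℝ → ℝ → ℝ) (hv : ContDiff ℝ (⊤ : ℕ∞) (Function.uncurry v))
    (hvu : ∀ t ∈ I, ∀ x : ℝ,
      v (T t) (δ1 * (x - ε * t) + e * ε * T t + δ2) = δ3 * u t x)
    (hftil : ∀ t ∈ I, ftil (T t) = δ1 ^ 3 * δ3 ^ (1 - n) * f t / deriv T t) :
    ∀ t ∈ I, ∀ x : ℝ,
      pdT v (T t) (δ1 * (x - ε * t) + e * ε * T t + δ2)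
        + (e * ε) * pdX v (T t) (δ1 * (x - ε * t) + e * ε * T t + δ2)
        + ftil (T t) * pdX3 (fun τ y => v τ y ^ n) (T t)
            (δ1 * (x - ε * t) + e * ε * T t + δ2) = 0 := by
  intro t ht x
  have htop : ((⊤ : ℕ∞) : WithTop ℕ∞) ≠ 0 := by simp
  set c : ℝ := -(δ1 * (ε * t)) + e * ε * T t + δ2 with hc
  have hYc : ∀ x' : ℝ, δ1 * (x' - ε * t) + e * ε * T t + δ2 = δ1 * x' + c := by
    intro x'; rw [hc]; ring
  set Y : ℝ := δ1 * x + c with hY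
  rw [hYc x]
  -- positivity of v (T t) ·
  have hvpos : ∀ y : ℝ, 0 < v (T t) y := by
    intro y
    have hx' : δ1 * ((y - c) / δ1) + c = y := by field_simp; ring
    have := hvu t ht ((y - c) / δ1)
    rw [hYc, hx'] at this
    rw [this]
    exact mul_pos hδ3 (hupos t ht _)
  -- smoothness of the slices
  have hg : ContDiff ℝ (⊤ : ℕ∞) (fun y => v (T t) y) :=
    hv.comp (contDiff_const.prodMk contDiff_id)
  have hU : ContDiff ℝ (⊤ : ℕ∞) (fun x' => u t x') :=
    hu.comp (contDiff_const.prodMk contDiff_id)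
  have hG : ContDiff ℝ (⊤ : ℕ∞) (fun y => v (T t) y ^ n) := by
    rw [contDiff_iff_contDiffAt]
    exact fun y => (hg.contDiffAt).rpow_const_of_ne (ne_of_gt (hvpos y))
  have hUn : ContDiff ℝ (⊤ : ℕ∞) (fun x' => u t x' ^ n) := by
    rw [contDiff_iff_contDiffAt]
    exact fun x' => (hU.contDiffAt).rpow_const_of_ne (ne_of_gt (hupos t ht x'))
  -- relation as a function of x'
  have hrel : (fun x' => v (T t) (δ1 * x' + c)) = fun x' => δ3 * u t x' := by
    funext x'; rw [← hYc]; exact hvu t ht x'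
  have hreln : (fun x' => v (T t) (δ1 * x' + c) ^ n) = fun x' => δ3 ^ n * (u t x' ^ n) := by
    funext x'
    rw [← hYc, hvu t ht x', Real.mul_rpow (le_of_lt hδ3) (le_of_lt (hupos t ht x'))]
  -- (1) spatial first derivative
  have h1 : δ1 * pdX v (T t) Y = δ3 * pdX u t x := by
    have lhs := deriv_comp_affine (hg.differentiable htop) δ1 c x
    rw [hrel] at lhs
    rw [deriv_const_mul δ3 ((hU.differentiable htop) x)] at lhs
    rw [pdX, pdX, ← hY] at *
    linarith [lhs]
  -- (2) spatial third derivative of the power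
  have h2 : δ1 ^ 3 * pdX3 (fun τ y => v τ y ^ n) (T t) Y
      = δ3 ^ n * pdX3 (fun t x => u t x ^ n) t x := by
    have lhs := deriv3_comp_affine hG δ1 c x
    rw [show (fun y => (fun y => v (T t) y ^ n) (δ1 * y + c)) = fun y => v (T t) (δ1 * y + c) ^ n from rfl] at lhs
    rw [hreln] at lhs
    rw [deriv3_const_mul hUn (δ3 ^ n) x] at lhs
    rw [pdX3, pdX3]
    rw [← hY] at lhs
    linarith [lhs]
  -- (3) time derivative
  have hTd : HasDerivAt T (deriv T t) t := ((hT.differentiable htop) t).hasDerivAt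
  have hγ2 : HasDerivAt (fun s => δ1 * (x - ε * s) + e * ε * T s + δ2)
      (δ1 * (-ε) + e * ε * deriv T t) t := by
    have ha : HasDerivAt (fun s : ℝ => δ1 * (x - ε * s)) (δ1 * (-ε)) t := by
      have : HasDerivAt (fun s : ℝ => x - ε * s) (-ε) t := by
        simpa using ((hasDerivAt_id t).const_mul ε).const_sub x
      exact this.const_mul δ1
    exact (ha.add (hTd.const_mul (e * ε))).add_const δ2
  have hchain := curve_deriv (hv.differentiable htop) hTd hγ2
  simp only [Function.uncurry_apply_pair] at hchain
  have hγ2t : δ1 * (x - ε * t) + e * ε * T t + δ2 = Y := hYc x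
  rw [hγ2t] at hchain
  have heq : (fun s => v (T s) (δ1 * (x - ε * s) + e * ε * T s + δ2))
      =ᶠ[nhds t] fun s => δ3 * u s x := by
    filter_upwards [hIopen.mem_nhds ht] with s hs
    exact hvu s hs x
  have h3 : deriv T t * pdT v (T t) Y + (δ1 * (-ε) + e * ε * deriv T t) * pdX v (T t) Y
      = δ3 * pdT u t x := by
    have := hchain.deriv
    rw [heq.deriv_eq] at this
    have hdu : DifferentiableAt ℝ (fun s => u s x) t :=
      ((hu.differentiable htop).comp (differentiable_id.prodMk (differentiable_const x))) t
    rw [deriv_const_mul δ3 hdu] at this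
    rw [pdT, pdT]
    simpa [Function.uncurry, pdX] using this.symm
  -- final algebra
  have hpde := hupde t ht x
  have hK : δ3 ^ (1 - n) * δ3 ^ n = δ3 := by
    rw [← Real.rpow_add hδ3]; simp
  rw [hftil t ht]
  set A := pdT v (T t) Y
  set B := pdX v (T t) Y
  set C := pdX3 (fun τ y => v τ y ^ n) (T t) Y
  set X0 := pdT u t x
  set X1 := pdX u t x
  set D := pdX3 (fun t x => u t x ^ n) t x
  have hT'0 := hT' t ht
  have hC : C = δ3 ^ n * D / δ1 ^ 3 := by
    field_simp at h2 ⊢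
    linarith [h2]
  have hB : B = δ3 * X1 / δ1 := by field_simp; linarith [h1]
  have hA : A = (δ3 * X0 - (δ1 * (-ε) + e * ε * deriv T t) * B) / deriv T t := by
    field_simp
    linarith [h3]
  rw [hA, hB, hC]
  have hD : X0 = -(ε * X1) - f t * D := by linarith [hpde]
  rw [hD]
  field_simp
  linear_combination (f t * D * δ1) * hK
end

section
/- (Similarity reduction of u_t + ε(u²)_x + t^k u_xxx = 0 for general k.) Let ε = ±1 and k ∈ ℝ, and let φ : ℝ → ℝ be a C³ function satisfying the ODE 3φ'''(ω) + 6ε·φ(ω)·φ'(ω) - (k+1)·ω·φ'(ω) + (k-2)·φ(ω) = 0 for all ω ∈ ℝ. Then the function u defined for t > 0, x ∈ ℝ by u(t, x) = t^{(k-2)/3} · φ(x · t^{-(k+1)/3}) satisfies ∂_t u + ε ∂_x(u²) + t^k ∂_x^3 u = 0 for all t > 0, x ∈ ℝ. (Here real powers of t are interpreted via Real.rpow.) -/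
open Real

private lemma deriv_scale (g : ℝ → ℝ) (hg : Differentiable ℝ g) (A c : ℝ) :
    deriv (fun y => A * g (y * c)) = fun y => A * c * deriv g (y * c) := by
  funext y
  have h1 : HasDerivAt (fun y : ℝ => y * c) c y := by
    simpa using (hasDerivAt_id y).mul_const c
  have h2 := ((hg (y * c)).hasDerivAt.comp y h1).const_mul A
  have h2' : HasDerivAt (fun y => A * g (y * c)) (A * (deriv g (y * c) * c)) y := by
    simpa [Function.comp] using h2
  rw [h2'.deriv]; ring

/-- Similarity reduction of `u_t + ε(u²)_x + t^k u_xxx = 0` via the ansatz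
`u = t^{(k-2)/3} φ(x t^{-(k+1)/3})`. -/
theorem similarity_reduction_tk
    (ε : ℝ) (hε : ε = 1 ∨ ε = -1) (k : ℝ)
    (φ : ℝ → ℝ) (hφ : ContDiff ℝ 3 φ)
    (hode : ∀ ω : ℝ,
      3 * iteratedDeriv 3 φ ω + 6 * ε * φ ω * deriv φ ω
        - (k + 1) * ω * deriv φ ω + (k - 2) * φ ω = 0)
    (u : ℝ → ℝ → ℝ)
    (hu : ∀ t x : ℝ, u t x = t ^ ((k - 2) / 3) * φ (x * t ^ (-(k + 1) / 3))) :
    ∀ t x : ℝ, 0 < t →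
      pdT u t x + ε * pdX (fun t x => u t x ^ 2) t x + t ^ k * pdX3 u t x = 0 := by
  intro t x ht
  set a : ℝ := (k - 2) / 3 with ha
  set b : ℝ := -(k + 1) / 3 with hb
  -- differentiability facts
  have hφN : ContDiff ℝ ((1 : ℕ) + (2 : ℕ) : ℕ) φ := by exact_mod_cast hφ
  have hφ1 : Differentiable ℝ φ := hφ.differentiable (by norm_num)
  have hd2 : ContDiff ℝ (1 : ℕ) (deriv^[2] φ) := hφN.iterate_deriv' 1 2
  have hφN2 : ContDiff ℝ ((2 : ℕ) + (1 : ℕ) : ℕ) φ := by exact_mod_cast hφ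
  have hd1 : ContDiff ℝ (2 : ℕ) (deriv^[1] φ) := hφN2.iterate_deriv' 2 1
  have hφ2 : Differentiable ℝ (deriv φ) := by
    have := hd1.differentiable (by norm_num)
    simpa using this
  have hφ3 : Differentiable ℝ (deriv (deriv φ)) := by
    have := hd2.differentiable (by norm_num)
    simpa [Function.iterate_succ, Function.comp] using this
  have hit : iteratedDeriv 3 φ = deriv (deriv (deriv φ)) := by
    show iteratedDeriv (2 + 1) φ = _
    rw [iteratedDeriv_succ]
    show deriv (iteratedDeriv (1 + 1) φ) = _
    rw [iteratedDeriv_succ, iteratedDeriv_one]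
  -- abbreviations
  set c : ℝ := t ^ b with hc
  set F : ℝ := φ (x * c) with hF
  set G : ℝ := deriv φ (x * c) with hG
  set H : ℝ := deriv (deriv (deriv φ)) (x * c) with hH
  -- the slice in x
  have hslice : (fun y => u t y) = fun y => t ^ a * φ (y * c) := by
    funext y; rw [hu]
  -- third x-derivative
  have hX3 : pdX3 u t x = t ^ a * c * c * c * H := by
    unfold pdX3
    rw [hslice, deriv_scale φ hφ1, deriv_scale (deriv φ) hφ2,
      deriv_scale (deriv (deriv φ)) hφ3]
  -- derivative of the square
  have h0 : HasDerivAt (fun y => t ^ a * φ (y * c)) (t ^ a * (G * c)) x := by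
    have h1 : HasDerivAt (fun y : ℝ => y * c) c x := by
      simpa using (hasDerivAt_id x).mul_const c
    have h2 := ((hφ1 (x * c)).hasDerivAt.comp x h1).const_mul (t ^ a)
    have : t ^ a * (G * c) = t ^ a * (deriv φ (x * c) * c) := by rw [hG]
    rw [this]
    simpa [Function.comp] using h2
  have hSq : pdX (fun t x => u t x ^ 2) t x
      = 2 * (t ^ a * F) * (t ^ a * (G * c)) := by
    unfold pdX
    have : (fun y => u t y ^ 2) = fun y => (t ^ a * φ (y * c)) ^ 2 := by
      funext y; rw [hu]
    rw [this]
    have h2 := h0.fun_pow 2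
    rw [h2.deriv]; push_cast; ring
  -- t-derivative
  have hTslice : (fun s => u s x) = fun s => s ^ a * φ (x * s ^ b) := by
    funext s; rw [hu]
  have hA : HasDerivAt (fun s : ℝ => s ^ a) (a * t ^ (a - 1)) t :=
    Real.hasDerivAt_rpow_const (Or.inl ht.ne')
  have hB : HasDerivAt (fun s : ℝ => x * s ^ b) (x * (b * t ^ (b - 1))) t :=
    (Real.hasDerivAt_rpow_const (p := b) (Or.inl ht.ne')).const_mul x
  have hC : HasDerivAt (fun s : ℝ => φ (x * s ^ b)) (G * (x * (b * t ^ (b - 1)))) t :=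
    (hφ1 (x * c)).hasDerivAt.comp t hB
  have hT : pdT u t x
      = a * t ^ (a - 1) * F + t ^ a * (G * (x * (b * t ^ (b - 1)))) := by
    unfold pdT
    rw [hTslice, (hA.fun_mul hC).deriv]
  -- rpow arithmetic
  have e3 : t ^ a * t ^ a * t ^ b = t ^ (a - 1) := by
    rw [← Real.rpow_add ht, ← Real.rpow_add ht]; congr 1; rw [ha, hb]; ring
  have e4 : t ^ k * (t ^ a * t ^ b * t ^ b * t ^ b) = t ^ (a - 1) := by
    rw [← Real.rpow_add ht, ← Real.rpow_add ht, ← Real.rpow_add ht, ← Real.rpow_add ht]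
    congr 1; rw [ha, hb]; ring
  have e5 : t ^ a * t ^ (b - 1) = t ^ (a - 1) * t ^ b := by
    rw [← Real.rpow_add ht, ← Real.rpow_add ht]; congr 1; ring
  -- combine
  have hbr : a * F + b * (x * c) * G + 2 * ε * F * G + H = 0 := by
    have h := hode (x * c)
    rw [hit] at h
    rw [ha, hb]
    linear_combination h / 3
  rw [hT, hSq, hX3]
  calc a * t ^ (a - 1) * F + t ^ a * (G * (x * (b * t ^ (b - 1))))
        + ε * (2 * (t ^ a * F) * (t ^ a * (G * c)))
        + t ^ k * (t ^ a * c * c * c * H)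
      = t ^ (a - 1) * (a * F + b * (x * c) * G + 2 * ε * F * G + H) := by
        rw [hc]
        linear_combination (G * x * b) * e5 + (2 * ε * F * G) * e3 + H * e4
    _ = 0 := by rw [hbr, mul_zero]
end
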